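/- Let x₀ ∈ ℂ, let L = {x₀ + t·i : t ∈ [0,1]}, and let g : ℂ̂ → ℂ̂ be a continuous surjection of the extended plane such that g⁻¹({x₀}) = L and g⁻¹({x}) is a singleton for every x ≠ x₀. Let X ⊆ ℂ̂ be a locally connected continuum with x₀ ∈ X such that the closure of g⁻¹(X) \ L meets L exactly in the two points x₀ and x₀ + i. Then g⁻¹(X) is a locally connected continuum. -/

import Mathlib

open Set Topology OnePoint

noncomputable section

/-- The set of connected components of a subset `S`. -/
def comps {α : Type*} [TopologicalSpace α] (S : Set α) : Set (Set α) :=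
  {C | ∃ z ∈ S, C = connectedComponentIn S z}

/-- The closed vertical segment `L` from `x₀` to `x₀ + i`, inside the extended
plane. -/
def seg (x₀ : ℂ) : Set (OnePoint ℂ) :=
  (fun t : ℝ => ((x₀ + t * Complex.I : ℂ) : OnePoint ℂ)) '' Icc (0 : ℝ) 1

/-- The open vertical segment `L°` from `x₀` to `x₀ + i`, inside the extended
plane. -/
def segO (x₀ : ℂ) : Set (OnePoint ℂ) :=
  (fun t : ℝ => ((x₀ + t * Complex.I : ℂ) : OnePoint ℂ)) '' Ioo (0 : ℝ) 1

section Aux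


lemma aux_preimage_preconn {α β : Type*} [TopologicalSpace α] [TopologicalSpace β]
    {f : α → β} (hf : IsClosedMap f) {s : Set β} (hs : IsPreconnected s)
    (hsf : s ⊆ Set.range f) (hfib : ∀ x ∈ s, IsPreconnected (f ⁻¹' {x})) :
    IsPreconnected (f ⁻¹' s) := by
  rw [isPreconnected_closed_iff]
  rintro u v hu hv hcov ⟨a, ha, hau⟩ ⟨b, hb, hbv⟩
  have hcov' : s ⊆ f '' u ∪ f '' v := by
    intro x hx
    obtain ⟨w, hw⟩ := hsf hx
    have hws : w ∈ f ⁻¹' s := by rw [Set.mem_preimage, hw]; exact hx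
    rcases hcov hws with h | h
    · exact Or.inl ⟨w, h, hw⟩
    · exact Or.inr ⟨w, h, hw⟩
  obtain ⟨x, hxs, hxu, hxv⟩ := isPreconnected_closed_iff.1 hs (f '' u) (f '' v)
      (hf u hu) (hf v hv) hcov' ⟨f a, ha, ⟨a, hau, rfl⟩⟩ ⟨f b, hb, ⟨b, hbv, rfl⟩⟩
  obtain ⟨a', ha'u, ha'x⟩ := hxu
  obtain ⟨b', hb'v, hb'x⟩ := hxv
  obtain ⟨w, hwx, hwu, hwv⟩ := isPreconnected_closed_iff.1 (hfib x hxs) u v hu hv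
      (fun w hw => hcov (by rw [Set.mem_preimage] at hw ⊢; rw [hw]; exact hxs))
      ⟨a', by simp [ha'x], ha'u⟩ ⟨b', by simp [hb'x], hb'v⟩
  refine ⟨w, ?_, hwu, hwv⟩
  rw [Set.mem_preimage] at hwx ⊢; rw [hwx]; exact hxs

lemma aux_lc_of_nhdsWithin {α : Type*} [TopologicalSpace α] {S : Set α}
    (h : ∀ x ∈ S, ∀ U ∈ 𝓝[S] x, ∃ V ∈ 𝓝[S] x, IsPreconnected V ∧ V ⊆ U ∧ V ⊆ S) :
    LocallyConnectedSpace ↥S := by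
  rw [locallyConnectedSpace_iff_connected_subsets]
  intro x U hU
  have hU' : Subtype.val '' U ∈ 𝓝[S] (x : α) := by
    rw [← map_nhds_subtype_val x]; exact Filter.image_mem_map hU
  obtain ⟨V, hV, hVc, hVU, hVS⟩ := h x x.2 _ hU'
  refine ⟨Subtype.val ⁻¹' V, ?_, ?_, ?_⟩
  · exact preimage_coe_mem_nhds_subtype.2 hV
  · have himg : Subtype.val '' (Subtype.val ⁻¹' V : Set ↥S) = V := by
      rw [Subtype.image_preimage_coe]; exact Set.inter_eq_right.2 hVS
    rw [← Topology.IsInducing.subtypeVal.isPreconnected_image, himg]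
    exact hVc
  · intro v hv
    obtain ⟨u, huU, huv⟩ := hVU hv
    rwa [← Subtype.ext huv]

lemma aux_lc_extract {α : Type*} [TopologicalSpace α] {S : Set α}
    (h : LocallyConnectedSpace ↥S) {x : α} (hx : x ∈ S) {N : Set α} (hN : N ∈ 𝓝[S] x) :
    ∃ U O : Set α, IsOpen O ∧ U = O ∩ S ∧ x ∈ U ∧ IsPreconnected U ∧ U ⊆ N := by
  have hN' : (Subtype.val ⁻¹' N : Set ↥S) ∈ 𝓝 (⟨x, hx⟩ : ↥S) :=
    preimage_coe_mem_nhds_subtype.2 hN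
  obtain ⟨V, hVN, hVo, hxV, hVc⟩ :=
    locallyConnectedSpace_iff_subsets_isOpen_isConnected.1 h _ _ hN'
  obtain ⟨O, hO, hOV⟩ := isOpen_induced_iff.1 hVo
  refine ⟨Subtype.val '' V, O, hO, ?_, ⟨⟨x, hx⟩, hxV, rfl⟩, ?_, ?_⟩
  · rw [← hOV, Subtype.image_preimage_coe, Set.inter_comm]
  · rw [Topology.IsInducing.subtypeVal.isPreconnected_image]
    exact hVc.isPreconnected
  · rintro y ⟨v, hvV, rfl⟩
    exact hVN hvV

lemma aux_tube {α β : Type*} [TopologicalSpace α] [TopologicalSpace β] {f : α → β}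
    (hf : IsClosedMap f) {y : β} {W : Set α} (hW : IsOpen W) (hfib : f ⁻¹' {y} ⊆ W) :
    ∃ O, IsOpen O ∧ y ∈ O ∧ f ⁻¹' O ⊆ W := by
  refine ⟨(f '' Wᶜ)ᶜ, isOpen_compl_iff.2 (hf _ hW.isClosed_compl), ?_, ?_⟩
  · rintro ⟨w, hwW, hwy⟩
    exact hwW (hfib (by simp [hwy]))
  · intro w hw
    by_contra hwW
    exact hw ⟨w, hwW, rfl⟩

lemma aux_comp_closure {α : Type*} [TopologicalSpace α] [T1Space α] {X U : Set α}
    (hlc : LocallyConnectedSpace ↥X) (hUX : U ⊆ X)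
    (hUo : ∀ q ∈ U, U ∈ 𝓝[X] q) (hUc : IsPreconnected U)
    {e w : α} (he : e ∈ U) (hw : w ∈ U) (hwe : w ≠ e) :
    e ∈ closure (connectedComponentIn (U \ {e}) w) := by
  set S := U \ {e} with hSdef
  set Q := connectedComponentIn S w with hQdef
  have hwS : w ∈ S := ⟨hw, hwe⟩
  have hQw : w ∈ Q := mem_connectedComponentIn hwS
  have hQS : Q ⊆ S := connectedComponentIn_subset S w
  have hQc : IsPreconnected Q := isPreconnected_connectedComponentIn
  have hclQ : closure Q ∩ S ⊆ Q := by
    rintro y ⟨hy1, hy2⟩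
    have hins : IsPreconnected (insert y Q) :=
      hQc.subset_closure (Set.subset_insert y Q)
        (Set.insert_subset_iff.2 ⟨hy1, subset_closure⟩)
    have hsub : insert y Q ⊆ Q :=
      hins.subset_connectedComponentIn (Set.mem_insert_of_mem y hQw)
        (Set.insert_subset_iff.2 ⟨hy2, hQS⟩)
    exact hsub (Set.mem_insert y Q)
  have hQn : ∀ q ∈ Q, ∃ O, IsOpen O ∧ q ∈ O ∧ O ∩ X ⊆ Q := by
    intro q hq
    have hqS : q ∈ S := hQS hq
    have hSn : S ∈ 𝓝[X] q := by
      have h1 : U ∈ 𝓝[X] q := hUo q hqS.1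
      have h2 : ({e}ᶜ : Set α) ∈ 𝓝[X] q := mem_nhdsWithin_of_mem_nhds
        (isOpen_compl_singleton.mem_nhds hqS.2)
      have := Filter.inter_mem h1 h2
      rwa [← Set.diff_eq] at this
    obtain ⟨W, O, hO, hWO, hqW, hWc, hWS⟩ := aux_lc_extract hlc (hUX hqS.1) hSn
    refine ⟨O, hO, by rw [hWO] at hqW; exact hqW.1, ?_⟩
    have hWQ : W ⊆ Q := by
      have h1 : W ⊆ connectedComponentIn S q :=
        hWc.subset_connectedComponentIn hqW hWS
      rwa [← connectedComponentIn_eq hq] at h1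
    rw [hWO] at hWQ; exact hWQ
  by_contra he'
  have hQn' : ∀ q : α, ∃ O, IsOpen O ∧ (q ∈ Q → q ∈ O ∧ O ∩ X ⊆ Q) := by
    intro q
    by_cases hq : q ∈ Q
    · obtain ⟨O, h1, h2, h3⟩ := hQn q hq; exact ⟨O, h1, fun _ => ⟨h2, h3⟩⟩
    · exact ⟨∅, isOpen_empty, fun h => absurd h hq⟩
  choose O hOopen hOspec using hQn'
  set u := ⋃ q ∈ Q, O q with hu
  have huo : IsOpen u := isOpen_biUnion fun q _ => hOopen q
  have hQu : Q ⊆ u := fun q hq => Set.mem_biUnion hq (hOspec q hq).1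
  have huX : u ∩ X ⊆ Q := by
    rintro y ⟨hyu, hyX⟩
    obtain ⟨q, hq, hyO⟩ := Set.mem_iUnion₂.1 hyu
    exact (hOspec q hq).2 ⟨hyO, hyX⟩
  have hcov : U ⊆ u ∪ (closure Q)ᶜ := by
    intro y hy
    by_cases hyc : y ∈ closure Q
    · by_cases hye : y = e
      · exact absurd (hye ▸ hyc) he'
      · exact Or.inl (hQu (hclQ ⟨hyc, hy, hye⟩))
    · exact Or.inr hyc
  obtain ⟨y, hyU, hyu, hyv⟩ := hUc u (closure Q)ᶜ huo
    (isOpen_compl_iff.2 isClosed_closure) hcov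
    ⟨w, hw, hQu hQw⟩ ⟨e, he, he'⟩
  exact hyv (subset_closure (huX ⟨hyu, hUX hyU⟩))

end Aux

/-- under the collapsing map `g`, if `X` is a locally connected
continuum with `x₀ ∈ X` and `closure (g⁻¹(X) \ L) ∩ L = {x₀, x₀ + i}`, then
`g⁻¹(X)` is a locally connected continuum. -/
theorem stmt_15 (x₀ : ℂ) (g : OnePoint ℂ → OnePoint ℂ)
    (hgc : Continuous g) (hgs : Function.Surjective g)
    (hgL : g ⁻¹' {((x₀ : ℂ) : OnePoint ℂ)} = seg x₀)
    (hginj : ∀ x : OnePoint ℂ, x ≠ ((x₀ : ℂ) : OnePoint ℂ) → ∃ y, g ⁻¹' {x} = {y})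
    (X : Set (OnePoint ℂ)) (hcomp : IsCompact X) (hconn : IsConnected X)
    (hlc : LocallyConnectedSpace ↥X)
    (hx₀ : ((x₀ : ℂ) : OnePoint ℂ) ∈ X)
    (hcl : closure (g ⁻¹' X \ seg x₀) ∩ seg x₀ =
      {((x₀ : ℂ) : OnePoint ℂ), ((x₀ + Complex.I : ℂ) : OnePoint ℂ)}) :
    IsCompact (g ⁻¹' X) ∧ IsConnected (g ⁻¹' X) ∧
      LocallyConnectedSpace ↥(g ⁻¹' X) := by
  set φ : ℝ → OnePoint ℂ := fun t => ((x₀ + t * Complex.I : ℂ) : OnePoint ℂ) with hφdef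
  set L : Set (OnePoint ℂ) := seg x₀ with hLdef
  set K : Set (OnePoint ℂ) := g ⁻¹' X with hKdef
  set e0 : OnePoint ℂ := ((x₀ : ℂ) : OnePoint ℂ) with he0def
  set e1 : OnePoint ℂ := ((x₀ + Complex.I : ℂ) : OnePoint ℂ) with he1def
  have hLφ : L = φ '' Icc (0:ℝ) 1 := rfl
  have hφc : Continuous φ :=
    OnePoint.continuous_coe.comp (by continuity)
  have hφinj : Function.Injective φ := by
    intro a b h
    have h1 : (x₀ + (a:ℂ) * Complex.I) = x₀ + (b:ℂ) * Complex.I := OnePoint.coe_injective h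
    have h2 : (a:ℂ) = b := mul_right_cancel₀ Complex.I_ne_zero (add_left_cancel h1)
    exact_mod_cast h2
  have hdist : ∀ a b : ℝ, dist ((x₀ + (a:ℂ) * Complex.I : ℂ)) (x₀ + (b:ℂ) * Complex.I) = dist a b := by
    intro a b
    rw [dist_eq_norm, Real.dist_eq]
    have h : (x₀ + (a:ℂ)*Complex.I) - (x₀ + (b:ℂ)*Complex.I) = ((a - b : ℝ) : ℂ) * Complex.I := by
      push_cast; ring
    rw [h, norm_mul, Complex.norm_real, Complex.norm_I, mul_one, Real.norm_eq_abs]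
  have he0L : e0 ∈ L := ⟨0, ⟨le_refl _, zero_le_one⟩,
    congrArg (fun z : ℂ => (z : OnePoint ℂ)) (by push_cast; ring)⟩
  have he1L : e1 ∈ L := ⟨1, ⟨zero_le_one, le_refl _⟩,
    congrArg (fun z : ℂ => (z : OnePoint ℂ)) (by push_cast; ring)⟩
  have hgmem : ∀ p, p ∈ L ↔ g p = e0 := by
    intro p
    rw [← hgL]
    simp only [Set.mem_preimage, Set.mem_singleton_iff]
  have hgLe0 : ∀ p ∈ L, g p = e0 := fun p hp => (hgmem p).1 hp
  have hLK : L ⊆ K := fun p hp => by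
    have := hgLe0 p hp
    simp only [hKdef, Set.mem_preimage, this]
    exact hx₀
  have hLcomp : IsCompact L := by rw [hLφ]; exact isCompact_Icc.image hφc
  have hLclosed : IsClosed L := hLcomp.isClosed
  have hLconn : IsPreconnected L := by
    rw [hLφ]; exact isPreconnected_Icc.image φ hφc.continuousOn
  have hgcl : IsClosedMap g := hgc.isClosedMap
  have hXcl : IsClosed X := hcomp.isClosed
  have hKcl : IsClosed K := hXcl.preimage hgc
  have hKcomp : IsCompact K := hKcl.isCompact
  have hfib : ∀ x : OnePoint ℂ, IsPreconnected (g ⁻¹' {x}) := by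
    intro x
    by_cases hx : x = e0
    · rw [hx]
      rw [show g ⁻¹' {e0} = L from hgL]
      exact hLconn
    · obtain ⟨y, hy⟩ := hginj x hx
      rw [hy]; exact isPreconnected_singleton
  have hrange : ∀ s : Set (OnePoint ℂ), s ⊆ Set.range g := by
    intro s; rw [hgs.range_eq]; exact subset_univ _
  have hKconn : IsConnected K := by
    refine ⟨⟨e0, hLK he0L⟩, ?_⟩
    exact aux_preimage_preconn hgcl hconn.isPreconnected (hrange X) (fun x _ => hfib x)
  refine ⟨hKcomp, hKconn, ?_⟩
  -- local connectedness
  set D : Set (OnePoint ℂ) := closure (K \ L) with hDdef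
  have hDL : D ∩ L = {e0, e1} := hcl
  -- the key endpoint lemma
  have key : ∀ (c c' : ℂ) (τ : ℝ), τ ∈ Icc (0:ℝ) 1 → ((c : ℂ) : OnePoint ℂ) = φ τ →
      dist c c' = 1 → D ∩ L ⊆ {((c : ℂ) : OnePoint ℂ), ((c' : ℂ) : OnePoint ℂ)} →
      ∀ N ∈ 𝓝[K] ((c : ℂ) : OnePoint ℂ),
        ∃ V ∈ 𝓝[K] ((c : ℂ) : OnePoint ℂ), IsPreconnected V ∧ V ⊆ N ∧ V ⊆ K := by
    intro c c' τ hτ hcφ hdcc' hsub N hN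
    set p : OnePoint ℂ := ((c : ℂ) : OnePoint ℂ) with hpdef
    have hcc : c = x₀ + (τ:ℂ) * Complex.I := OnePoint.coe_injective hcφ
    have hpL : p ∈ L := by rw [hLφ]; exact ⟨τ, hτ, hcφ.symm⟩
    have hpK : p ∈ K := hLK hpL
    obtain ⟨W, hWo, hpW, hWN⟩ := mem_nhdsWithin.1 hN
    -- choose radius r
    have hWc : IsOpen (((↑) : ℂ → OnePoint ℂ) ⁻¹' W) := hWo.preimage OnePoint.continuous_coe
    obtain ⟨ρ, hρ0, hρW⟩ := Metric.isOpen_iff.1 hWc c hpW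
    set r : ℝ := min (ρ/3) (1/4) with hrdef
    have hr0 : 0 < r := lt_min (by linarith) (by norm_num)
    have h2rρ : 2*r < ρ := by
      have := min_le_left (ρ/3) (1/4); simp only [hrdef]; linarith [min_le_left (ρ/3) (1/4)]
    have h2r1 : 2*r < 1 := by
      have := min_le_right (ρ/3) (1/4); linarith
    set cb2 : Set (OnePoint ℂ) := ((↑) : ℂ → OnePoint ℂ) '' Metric.closedBall c (2*r) with hcb2
    set cb1 : Set (OnePoint ℂ) := ((↑) : ℂ → OnePoint ℂ) '' Metric.closedBall c r with hcb1
    set ob : Set (OnePoint ℂ) := ((↑) : ℂ → OnePoint ℂ) '' Metric.ball c r with hob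
    have hcb2comp : IsCompact cb2 := (isCompact_closedBall c (2*r)).image OnePoint.continuous_coe
    have hcb2cl : IsClosed cb2 := hcb2comp.isClosed
    have hcb1cl : IsClosed cb1 := ((isCompact_closedBall c r).image OnePoint.continuous_coe).isClosed
    have hobo : IsOpen ob := OnePoint.isOpenEmbedding_coe.isOpenMap _ Metric.isOpen_ball
    have hobcb1 : ob ⊆ cb1 := image_mono Metric.ball_subset_closedBall
    have hobcb2 : ob ⊆ cb2 := image_mono (Metric.ball_subset_closedBall.trans
      (Metric.closedBall_subset_closedBall (by linarith)))
    have hcb2W : cb2 ⊆ W := by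
      rintro y ⟨z, hz, rfl⟩
      exact hρW (lt_of_le_of_lt (Metric.mem_closedBall.1 hz) h2rρ)
    have hpob : p ∈ ob := ⟨c, Metric.mem_ball_self hr0, rfl⟩
    have hpcb2 : p ∈ cb2 := hobcb2 hpob
    -- the annulus A
    set A : Set (OnePoint ℂ) := D ∩ (cb2 \ ob) with hA
    have hAcomp : IsCompact A := (hcb2comp.diff hobo).inter_left isClosed_closure
    have hAL : ∀ a ∈ A, a ∉ L := by
      rintro a ⟨haD, hacb2, haob⟩ haL
      rcases hsub ⟨haD, haL⟩ with h | h
      · exact haob (h ▸ hpob)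
      · rw [h] at hacb2
        obtain ⟨z, hz, hzeq⟩ := hacb2
        have : z = c' := OnePoint.coe_injective hzeq
        rw [this] at hz
        have := Metric.mem_closedBall.1 hz
        rw [dist_comm] at this
        rw [hdcc'] at this
        linarith
    have hAg : ∀ a ∈ A, g a ≠ e0 := by
      intro a ha hga
      exact hAL a ha ((hgmem a).2 hga)
    have hgAcl : IsClosed (g '' A) := (hAcomp.image hgc).isClosed
    have he0gA : e0 ∉ g '' A := by
      rintro ⟨a, ha, hga⟩
      exact hAg a ha hga
    -- connected open-in-X neighborhood U of e0 avoiding g '' A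
    have hmem : ((g '' A)ᶜ ∩ X) ∈ 𝓝[X] e0 :=
      mem_nhdsWithin.2 ⟨(g '' A)ᶜ, hgAcl.isOpen_compl, he0gA, subset_rfl⟩
    obtain ⟨U, OU, hOUo, hUOU, he0U, hUc, hUsub⟩ := aux_lc_extract hlc hx₀ hmem
    have hUX : U ⊆ X := by rw [hUOU]; exact inter_subset_right
    have hUA : U ⊆ (g '' A)ᶜ := fun y hy => (hUsub hy).1
    have hUnhds : ∀ q ∈ U, U ∈ 𝓝[X] q := by
      intro q hq
      rw [hUOU] at hq ⊢
      exact mem_nhdsWithin.2 ⟨OU, hOUo, hq.1, subset_rfl⟩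
    -- the set V and component C
    set V : Set (OnePoint ℂ) := K ∩ g ⁻¹' U ∩ cb2 with hV
    have hpV : p ∈ V := ⟨⟨hpK, by simp only [Set.mem_preimage, hgLe0 p hpL]; exact he0U⟩, hpcb2⟩
    set C : Set (OnePoint ℂ) := connectedComponentIn V p with hC
    have hCc : IsPreconnected C := isPreconnected_connectedComponentIn
    have hCV : C ⊆ V := connectedComponentIn_subset V p
    have hCN : C ⊆ N := fun y hy => hWN ⟨hcb2W (hCV hy).2, (hCV hy).1.1⟩
    have hCK : C ⊆ K := fun y hy => (hCV hy).1.1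
    -- main claim : V ∩ ob ⊆ C
    have claim : V ∩ ob ⊆ C := by
      rintro z ⟨hzV, hzob⟩
      by_cases hzL : z ∈ L
      · -- z on the segment
        obtain ⟨s, hs, hφs⟩ := hLφ ▸ hzL
        have hsdist : dist s τ < r := by
          obtain ⟨zc, hzc, hzeq⟩ := hzob
          have hzz : zc = x₀ + (s:ℂ)*Complex.I := OnePoint.coe_injective (by rw [hzeq, ← hφs])
          rw [hzz, hcc] at hzc
          have := Metric.mem_ball.1 hzc
          rwa [hdist s τ] at this
        set T : Set (OnePoint ℂ) := φ '' (uIcc s τ) with hT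
        have hTc : IsPreconnected T := isPreconnected_uIcc.image φ hφc.continuousOn
        have hTV : T ⊆ V := by
          rintro y ⟨u, hu, rfl⟩
          have huI : u ∈ Icc (0:ℝ) 1 := Set.ordConnected_Icc.uIcc_subset hs hτ hu
          have hφuL : φ u ∈ L := by rw [hLφ]; exact ⟨u, huI, rfl⟩
          refine ⟨⟨hLK hφuL, ?_⟩, ?_⟩
          · simp only [Set.mem_preimage, hgLe0 _ hφuL]; exact he0U
          · refine ⟨x₀ + (u:ℂ)*Complex.I, ?_, rfl⟩
            rw [Metric.mem_closedBall, hcc, hdist u τ]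
            have : dist u τ ≤ dist s τ := by
              rw [Real.dist_eq, Real.dist_eq]
              rcases Set.mem_uIcc.1 hu with ⟨h1, h2⟩ | ⟨h1, h2⟩ <;>
                rcases abs_cases (s - τ) with ⟨hh1, hh2⟩ | ⟨hh1, hh2⟩ <;>
                rw [abs_sub_le_iff] <;> exact ⟨by linarith, by linarith⟩
            linarith
        have hpT : p ∈ T := ⟨τ, Set.right_mem_uIcc, hcφ.symm⟩
        have hzT : z ∈ T := ⟨s, Set.left_mem_uIcc, hφs⟩
        exact (hTc.subset_connectedComponentIn hpT hTV) hzT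
      · -- z off the segment
        set w : OnePoint ℂ := g z with hw
        have hwU : w ∈ U := hzV.1.2
        have hwe0 : w ≠ e0 := fun h => hzL ((hgmem z).2 h)
        set Q : Set (OnePoint ℂ) := connectedComponentIn (U \ {e0}) w with hQ
        have he0clQ : e0 ∈ closure Q :=
          aux_comp_closure hlc hUX hUnhds hUc he0U hwU hwe0
        have hQUe : Q ⊆ U \ {e0} := connectedComponentIn_subset _ _
        have hwQ : w ∈ Q := mem_connectedComponentIn ⟨hwU, hwe0⟩
        set Q' : Set (OnePoint ℂ) := g ⁻¹' Q with hQ'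
        have hQ'c : IsPreconnected Q' :=
          aux_preimage_preconn hgcl isPreconnected_connectedComponentIn (hrange Q)
            (fun x _ => hfib x)
        have hzQ' : z ∈ Q' := hwQ
        have hQ'L : ∀ y ∈ Q', y ∉ L := by
          intro y hy hyL
          have : g y = e0 := hgLe0 y hyL
          have : e0 ∈ Q := by rwa [← this]
          exact (hQUe this).2 rfl
        have hQ'K : Q' ⊆ K := fun y hy => (hUX (hQUe hy).1 : g y ∈ X)
        have hQ'KL : Q' ⊆ K \ L := fun y hy => ⟨hQ'K hy, hQ'L y hy⟩
        have hQ'A : ∀ y ∈ Q', y ∉ A := by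
          intro y hy hyA
          exact hUA (hQUe hy).1 ⟨y, hyA, rfl⟩
        have hQ'cov : Q' ⊆ ob ∪ cb2ᶜ := by
          intro y hy
          by_cases hycb2 : y ∈ cb2
          · by_cases hyob : y ∈ ob
            · exact Or.inl hyob
            · exact absurd ⟨subset_closure (hQ'KL hy), hycb2, hyob⟩ (hQ'A y hy)
          · exact Or.inr hycb2
        have hQ'ob : Q' ⊆ ob := by
          rcases IsPreconnected.subset_or_subset hobo hcb2cl.isOpen_compl
              (Set.disjoint_left.2 fun y hy hyc => hyc (hobcb2 hy)) hQ'cov hQ'c with h | h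
          · exact h
          · exact absurd (hobcb2 (hzob)) (h hzQ')
        have hpclQ' : p ∈ closure Q' := by
          have h1 : g '' Q' = Q := hgs.image_preimage Q
          have h2 : closure Q ⊆ g '' (closure Q') := by
            apply closure_minimal _ (hgcl _ isClosed_closure)
            rw [← h1]; exact image_mono subset_closure
          obtain ⟨y, hyclQ', hye0⟩ := h2 he0clQ
          have hyL : y ∈ L := (hgmem y).2 hye0
          have hyD : y ∈ D := closure_mono (fun a ha => hQ'KL ha) hyclQ'
          have hycb1 : y ∈ cb1 := closure_minimal hobcb1 hcb1cl (closure_mono hQ'ob hyclQ')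
          rcases hsub ⟨hyD, hyL⟩ with h | h
          · rwa [← h]
          · exfalso
            rw [h] at hycb1
            obtain ⟨zc, hzc, hzeq⟩ := hycb1
            have : zc = c' := OnePoint.coe_injective hzeq
            rw [this] at hzc
            have := Metric.mem_closedBall.1 hzc
            rw [dist_comm, hdcc'] at this
            linarith
        set T : Set (OnePoint ℂ) := insert p Q' with hT
        have hTc : IsPreconnected T :=
          hQ'c.subset_closure (Set.subset_insert _ _)
            (Set.insert_subset_iff.2 ⟨hpclQ', subset_closure⟩)
        have hTV : T ⊆ V := by
          rintro y (rfl | hy)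
          · exact hpV
          · exact ⟨⟨hQ'K hy, (hQUe hy).1⟩, hobcb2 (hQ'ob hy)⟩
        exact (hTc.subset_connectedComponentIn (Set.mem_insert _ _) hTV)
          (Set.mem_insert_of_mem _ hzQ')
    -- C is a neighborhood of p within K
    refine ⟨C, ?_, hCc, hCN, hCK⟩
    refine mem_nhdsWithin.2 ⟨g ⁻¹' OU ∩ ob, (hOUo.preimage hgc).inter hobo, ?_, ?_⟩
    · constructor
      · simp only [Set.mem_preimage, hgLe0 p hpL]
        rw [hUOU] at he0U; exact he0U.1
      · exact hpob
    · rintro y ⟨⟨hyOU, hyob⟩, hyK⟩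
      apply claim
      refine ⟨⟨⟨hyK, ?_⟩, hobcb2 hyob⟩, hyob⟩
      rw [hUOU]; exact ⟨hyOU, hyK⟩
  -- now the local connectedness criterion
  apply aux_lc_of_nhdsWithin
  intro p hp N hN
  obtain ⟨W, hWo, hpW, hWN⟩ := mem_nhdsWithin.1 hN
  by_cases hpL : p ∈ L
  · by_cases hpD : p ∈ D
    · -- endpoint case
      have hpe : p ∈ ({e0, e1} : Set (OnePoint ℂ)) := by rw [← hDL]; exact ⟨hpD, hpL⟩
      rcases hpe with h | h
      · subst h
        exact key x₀ (x₀ + Complex.I) 0 ⟨le_refl _, zero_le_one⟩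
          (congrArg (fun z : ℂ => (z : OnePoint ℂ)) (by push_cast; ring))
          (by simp [Complex.dist_eq]) (by rw [hDL]) N hN
      · rw [Set.mem_singleton_iff] at h
        subst h
        exact key (x₀ + Complex.I) x₀ 1 ⟨zero_le_one, le_refl _⟩
          (congrArg (fun z : ℂ => (z : OnePoint ℂ)) (by push_cast; ring))
          (by simp [Complex.dist_eq]) (by rw [hDL, Set.pair_comm e0 e1]) N hN
    · -- interior of segment
      rw [hLφ] at hpL
      obtain ⟨t, ht, hφt⟩ := hpL
      set W₂ : Set (OnePoint ℂ) := W ∩ Dᶜ with hW₂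
      have hW₂o : IsOpen W₂ := hWo.inter isClosed_closure.isOpen_compl
      have hpW₂ : p ∈ W₂ := ⟨hpW, hpD⟩
      have hφW₂ : IsOpen (φ ⁻¹' W₂) := hW₂o.preimage hφc
      obtain ⟨δ, hδ0, hδ⟩ := Metric.isOpen_iff.1 hφW₂ t (by rw [Set.mem_preimage, hφt]; exact hpW₂)
      set J : Set ℝ := Icc (t - δ/2) (t + δ/2) ∩ Icc 0 1 with hJ
      set V : Set (OnePoint ℂ) := φ '' J with hVdef
      have hJconn : IsPreconnected J := by
        rw [hJ, Set.Icc_inter_Icc]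
        exact isPreconnected_Icc
      have hVc : IsPreconnected V := hJconn.image φ hφc.continuousOn
      have hVW₂ : V ⊆ W₂ := by
        rintro y ⟨s, ⟨⟨hs1, hs2⟩, _⟩, rfl⟩
        apply hδ
        rw [Metric.mem_ball, Real.dist_eq, abs_sub_lt_iff]
        constructor <;> linarith
      have hVL : V ⊆ L := by
        rintro y ⟨s, ⟨_, hs01⟩, rfl⟩
        rw [hLφ]; exact ⟨s, hs01, rfl⟩
      have hVK : V ⊆ K := fun y hy => hLK (hVL hy)
      have hVN : V ⊆ N := fun y hy => hWN ⟨(hVW₂ hy).1, hVK hy⟩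
      refine ⟨V, ?_, hVc, hVN, hVK⟩
      have himgcl : IsClosed (φ '' (Icc (0:ℝ) 1 \ Ioo (t - δ/2) (t + δ/2))) :=
        ((isCompact_Icc.diff isOpen_Ioo).image hφc).isClosed
      refine mem_nhdsWithin.2 ⟨W₂ ∩ (φ '' (Icc (0:ℝ) 1 \ Ioo (t - δ/2) (t + δ/2)))ᶜ,
        hW₂o.inter himgcl.isOpen_compl, ⟨hpW₂, ?_⟩, ?_⟩
      · rintro ⟨s, ⟨hsI, hsIoo⟩, hφsp⟩
        have hst : s = t := hφinj (hφsp.trans hφt.symm)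
        subst hst
        exact hsIoo ⟨by linarith, by linarith⟩
      · rintro y ⟨⟨hyW₂, hyimg⟩, hyK⟩
        have hyL : y ∈ L := by
          by_contra h
          exact hyW₂.2 (subset_closure ⟨hyK, h⟩)
        rw [hLφ] at hyL
        obtain ⟨s, hsI, hφs⟩ := hyL
        have hsIoo : s ∈ Ioo (t - δ/2) (t + δ/2) := by
          by_contra h
          exact hyimg ⟨s, ⟨hsI, h⟩, hφs⟩
        exact ⟨s, ⟨⟨le_of_lt hsIoo.1, le_of_lt hsIoo.2⟩, hsI⟩, hφs⟩
  · -- off the segment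
    have hgp : g p ≠ e0 := fun h => hpL ((hgmem p).2 h)
    obtain ⟨y, hy⟩ := hginj (g p) hgp
    have hyp : g ⁻¹' {g p} = {p} := by
      have hpmem : p ∈ g ⁻¹' {g p} := rfl
      rw [hy] at hpmem ⊢
      rw [hpmem]
    set W' : Set (OnePoint ℂ) := W ∩ Lᶜ with hW'
    have hW'o : IsOpen W' := hWo.inter hLclosed.isOpen_compl
    have hfibW' : g ⁻¹' {g p} ⊆ W' := by
      rw [hyp]; exact Set.singleton_subset_iff.2 ⟨hpW, hpL⟩
    obtain ⟨O, hOo, hgpO, hOW'⟩ := aux_tube hgcl hW'o hfibW'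
    have he0O : e0 ∉ O := by
      intro h
      have : e0 ∈ g ⁻¹' O := by
        simp only [Set.mem_preimage, hgLe0 e0 he0L]; exact h
      exact (hOW' this).2 he0L
    have hOX : O ∩ X ∈ 𝓝[X] (g p) := mem_nhdsWithin.2 ⟨O, hOo, hgpO, subset_rfl⟩
    obtain ⟨U, OU, hOUo, hUOU, hgpU, hUc, hUsub⟩ := aux_lc_extract hlc hp hOX
    set V : Set (OnePoint ℂ) := g ⁻¹' U with hVdef
    have hUX : U ⊆ X := by rw [hUOU]; exact inter_subset_right
    have hUO : U ⊆ O := fun y hy => (hUsub hy).1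
    refine ⟨V, ?_, ?_, ?_, fun y hy => hUX hy⟩
    · refine mem_nhdsWithin.2 ⟨g ⁻¹' OU, hOUo.preimage hgc, ?_, ?_⟩
      · rw [hUOU] at hgpU
        exact hgpU.1
      · rintro y ⟨hyOU, hyK⟩
        rw [hVdef, Set.mem_preimage, hUOU]
        exact ⟨hyOU, hyK⟩
    · refine aux_preimage_preconn hgcl hUc (hrange U) ?_
      intro x hx
      exact hfib x
    · intro y hy
      have : y ∈ W' := hOW' (hUO hy)
      exact hWN ⟨this.1, hUX hy⟩
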